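/- For γ > 0 and α > 0, the constant η* := (1+α)/γ^{2+α} · (α²(1+γ)² + 1)/((α(1+γ)+1)³) is strictly positive, and equals (1+α) ∫₁^∞ (Ψ^{(1)}_{γ,1}(x))² ℓ_γ^{α−1}(x) dx, where Ψ^{(1)}_{γ,1}(x) = (1/γ³)(log x − γ)/x^{1+1/γ} and ℓ_γ(x) = γ^{-1}x^{-1-1/γ}. -/

import Mathlib

open Real MeasureTheory Filter Topology

private lemma aux_tendsto (n : ℕ) {c : ℝ} (hc : 0 < c) :
    Tendsto (fun t : ℝ => t ^ n * Real.exp (-(c * t))) atTop (𝓝 0) := by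
  have h := tendsto_rpow_mul_exp_neg_mul_atTop_nhds_zero n c hc
  refine h.congr' ?_
  filter_upwards [eventually_gt_atTop (0 : ℝ)] with t ht
  rw [Real.rpow_natCast, neg_mul]

/-- The constant η* is positive and equals the weighted squared-score integral. -/
theorem eta_star_positive_and_integral (γ α : ℝ) (hγ : 0 < γ) (hα : 0 < α) :
    0 < (1 + α) / γ ^ (2 + α) * ((α ^ 2 * (1 + γ) ^ 2 + 1) / (α * (1 + γ) + 1) ^ 3)
    ∧ (1 + α) / γ ^ (2 + α) * ((α ^ 2 * (1 + γ) ^ 2 + 1) / (α * (1 + γ) + 1) ^ 3)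
      = (1 + α) * ∫ x in Set.Ioi (1 : ℝ),
          (1 / γ ^ 3 * ((Real.log x - γ) / x ^ (1 + 1 / γ))) ^ 2 *
            (γ⁻¹ * x ^ (-1 - 1 / γ)) ^ (α - 1) := by
  have hA : 0 < α * (1 + γ) + 1 := by nlinarith
  have hγα : 0 < γ ^ (2 + α) := Real.rpow_pos_of_pos hγ _
  constructor
  · apply mul_pos (div_pos (by linarith) hγα)
    exact div_pos (by positivity) (by positivity)
  set c : ℝ := (α * (1 + γ) + 1) / γ with hcdef
  have hc : 0 < c := div_pos hA hγ
  -- the antiderivative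
  set F : ℝ → ℝ := fun x =>
    -(x ^ (-c) * ((Real.log x - γ) ^ 2 / c + 2 * (Real.log x - γ) / c ^ 2 + 2 / c ^ 3)) with hF
  have key : ∀ x : ℝ, 0 < x →
      HasDerivAt F ((Real.log x - γ) ^ 2 * x ^ (-(c + 1))) x := by
    intro x hx
    have h1 : HasDerivAt (fun y : ℝ => y ^ (-c)) (-c * x ^ (-c - 1)) x :=
      Real.hasDerivAt_rpow_const (Or.inl hx.ne')
    have h2 : HasDerivAt (fun y : ℝ => Real.log y - γ) x⁻¹ x :=
      (Real.hasDerivAt_log hx.ne').sub_const γ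
    have hq : HasDerivAt
        (fun y : ℝ => (Real.log y - γ) ^ 2 / c + 2 * (Real.log y - γ) / c ^ 2 + 2 / c ^ 3)
        ((2 * (Real.log x - γ) ^ 1 * x⁻¹) / c + 2 * x⁻¹ / c ^ 2 + 0) x := by
      have hsq := (h2.pow 2).div_const c
      have hlin := (h2.const_mul 2).div_const (c ^ 2)
      simpa using (hsq.add hlin).add_const (2 / c ^ 3)
    have hd := (h1.mul hq).neg
    have hE : x ^ (-c) = x ^ (-c - 1) * x := by
      rw [← Real.rpow_add_one hx.ne' (-c - 1)]; congr 1; ring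
    have hE' : (-(c + 1) : ℝ) = -c - 1 := by ring
    refine hd.congr_deriv (Eq.symm ?_)
    rw [hE', hE]
    have hxne : x ≠ 0 := hx.ne'
    have hcne : c ≠ 0 := hc.ne'
    field_simp
    ring
  have hF1cont : ContinuousWithinAt F (Set.Ici 1) 1 :=
    (key 1 one_pos).continuousAt.continuousWithinAt
  have hnonneg : ∀ x ∈ Set.Ioi (1 : ℝ), 0 ≤ (Real.log x - γ) ^ 2 * x ^ (-(c + 1)) := by
    intro x hx
    have : (0:ℝ) < x := lt_trans one_pos hx
    positivity
  -- limit of F at infinity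
  have hFtop : Tendsto F atTop (𝓝 0) := by
    set G : ℝ → ℝ := fun t =>
      -(Real.exp (-(c * t)) * ((t - γ) ^ 2 / c + 2 * (t - γ) / c ^ 2 + 2 / c ^ 3)) with hG
    have hH : Tendsto (fun t : ℝ =>
        (-(1 / c)) * (t ^ 2 * Real.exp (-(c * t)))
        + (2 * γ / c - 2 / c ^ 2) * (t ^ 1 * Real.exp (-(c * t)))
        + (-(γ ^ 2 / c) + 2 * γ / c ^ 2 - 2 / c ^ 3) * (t ^ 0 * Real.exp (-(c * t))))
        atTop (𝓝 0) := by
      have h2 := (aux_tendsto 2 hc).const_mul (-(1 / c))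
      have h1 := (aux_tendsto 1 hc).const_mul (2 * γ / c - 2 / c ^ 2)
      have h0 := (aux_tendsto 0 hc).const_mul (-(γ ^ 2 / c) + 2 * γ / c ^ 2 - 2 / c ^ 3)
      simpa using (h2.add h1).add h0
    have hGt : Tendsto G atTop (𝓝 0) := by
      refine hH.congr fun t => ?_
      simp only [hG, pow_one, pow_zero, one_mul]
      ring
    refine (hGt.comp tendsto_log_atTop).congr' ?_
    filter_upwards [eventually_gt_atTop (0 : ℝ)] with x hx
    simp only [Function.comp_apply, hG, hF]
    rw [Real.rpow_def_of_pos hx, show Real.log x * -c = -(c * Real.log x) by ring]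
  -- the value of the transformed integral
  have hJ : ∫ x in Set.Ioi (1 : ℝ), (Real.log x - γ) ^ 2 * x ^ (-(c + 1))
      = γ ^ 2 / c - 2 * γ / c ^ 2 + 2 / c ^ 3 := by
    rw [MeasureTheory.integral_Ioi_of_hasDerivAt_of_nonneg hF1cont
      (fun x hx => key x (lt_trans one_pos hx)) hnonneg hFtop]
    simp [hF]
    field_simp
    ring
  -- pointwise simplification of the integrand
  set K : ℝ := (1 / γ ^ 3) ^ 2 * (γ ^ (α - 1))⁻¹ with hK
  have hpt : ∀ x ∈ Set.Ioi (1 : ℝ),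
      (1 / γ ^ 3 * ((Real.log x - γ) / x ^ (1 + 1 / γ))) ^ 2 *
        (γ⁻¹ * x ^ (-1 - 1 / γ)) ^ (α - 1)
      = K * ((Real.log x - γ) ^ 2 * x ^ (-(c + 1))) := by
    intro x hx
    have hx0 : (0:ℝ) < x := lt_trans one_pos hx
    have e1 : (γ⁻¹ * x ^ (-1 - 1 / γ)) ^ (α - 1)
        = (γ ^ (α - 1))⁻¹ * x ^ ((-1 - 1 / γ) * (α - 1)) := by
      rw [Real.mul_rpow (inv_nonneg.2 hγ.le) (Real.rpow_nonneg hx0.le _),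
        Real.inv_rpow hγ.le, ← Real.rpow_mul hx0.le]
    have e2 : (x ^ (1 + 1 / γ)) ^ 2 = x ^ ((1 + 1 / γ) * 2) := by
      rw [← Real.rpow_natCast (x ^ (1 + 1 / γ)) 2, ← Real.rpow_mul hx0.le]
      norm_num
    have e3 : x ^ ((-1 - 1 / γ) * (α - 1)) / x ^ ((1 + 1 / γ) * 2)
        = x ^ (-(c + 1)) := by
      rw [← Real.rpow_sub hx0]
      congr 1
      rw [hcdef]
      field_simp
      ring
    simp only [mul_pow, div_pow]
    rw [e1, e2, hK]
    have hne1 : x ^ ((1 + 1 / γ) * 2) ≠ 0 := (Real.rpow_pos_of_pos hx0 _).ne'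
    have hne2 : γ ^ (α - 1) ≠ 0 := (Real.rpow_pos_of_pos hγ _).ne'
    rw [← e3]
    generalize x ^ ((-1 - 1 / γ) * (α - 1)) = X1
    generalize hX2 : x ^ ((1 + 1 / γ) * 2) = X2 at hne1 ⊢
    generalize γ ^ (α - 1) = P at hne2 ⊢
    field_simp
  calc (1 + α) / γ ^ (2 + α) * ((α ^ 2 * (1 + γ) ^ 2 + 1) / (α * (1 + γ) + 1) ^ 3)
      = (1 + α) * (K * (γ ^ 2 / c - 2 * γ / c ^ 2 + 2 / c ^ 3)) := by
        have hpow : γ ^ ((2:ℝ) + α) = γ ^ (α - 1) * γ ^ 3 := by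
          rw [show (2:ℝ) + α = (α - 1) + 3 by ring, Real.rpow_add hγ,
            show (3:ℝ) = ((3:ℕ):ℝ) by norm_num, Real.rpow_natCast]
        have hP : 0 < γ ^ (α - 1) := Real.rpow_pos_of_pos hγ _
        rw [hK, hpow, hcdef]
        field_simp
        ring
    _ = (1 + α) * ∫ x in Set.Ioi (1 : ℝ),
          (1 / γ ^ 3 * ((Real.log x - γ) / x ^ (1 + 1 / γ))) ^ 2 *
            (γ⁻¹ * x ^ (-1 - 1 / γ)) ^ (α - 1) := by
        rw [MeasureTheory.setIntegral_congr_fun measurableSet_Ioi hpt,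
          MeasureTheory.integral_const_mul, hJ]
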